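/- Let v be an integrable real random variable, c > 0, and σ the unique real with E[(v - σ)^+] = c. Let κ = min(v, σ). Then for any random variables A, I taking values in {0,1} with A ≤ I and with I independent of v (I is decided before observing v), E[A·v - I·c] ≤ E[A·κ]. Moreover equality holds if and only if P(I = 1, v > σ, A = 0) = 0. -/

import Mathlib

open MeasureTheory Filter

/-- The key amortization lemma for a single Pandora box: with Weitzman index `σ`
(`E[(v - σ)⁺] = c`), capped value `κ = min v σ`, and 0/1-valued claiming/inspection
indicators `A ≤ I` with `I` independent of `v`, we have
`E[A·v - I·c] ≤ E[A·κ]`, with equality iff `P(I = 1, v > σ, A = 0) = 0`. -/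
theorem pandora_key_amortization
    {Ω : Type*} [MeasurableSpace Ω] (μ : Measure Ω) [IsProbabilityMeasure μ]
    (v A I : Ω → ℝ) (hv : Integrable v μ)
    (hAmeas : Measurable A) (hImeas : Measurable I)
    (hA01 : ∀ ω, A ω = 0 ∨ A ω = 1) (hI01 : ∀ ω, I ω = 0 ∨ I ω = 1)
    (hAI : ∀ ω, A ω ≤ I ω)
    (hindep : ProbabilityTheory.IndepFun I v μ)
    (c σ : ℝ) (hc : 0 < c)
    (hσ : ∫ ω, max (v ω - σ) 0 ∂μ = c) :
    (∫ ω, (A ω * v ω - I ω * c) ∂μ ≤ ∫ ω, A ω * min (v ω) σ ∂μ) ∧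
    ((∫ ω, (A ω * v ω - I ω * c) ∂μ = ∫ ω, A ω * min (v ω) σ ∂μ) ↔
      μ {ω | I ω = 1 ∧ σ < v ω ∧ A ω = 0} = 0) := by
  set g : Ω → ℝ := fun ω => max (v ω - σ) 0 with hg_def
  have hAbd : ∀ ω, ‖A ω‖ ≤ 1 := by
    intro ω; rcases hA01 ω with h | h <;> simp [h]
  have hIbd : ∀ ω, ‖I ω‖ ≤ 1 := by
    intro ω; rcases hI01 ω with h | h <;> simp [h]
  have hg_int : Integrable g μ := (hv.sub (integrable_const σ)).pos_part
  have hAg : Integrable (fun ω => A ω * g ω) μ :=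
    hg_int.bdd_mul hAmeas.aestronglyMeasurable (ae_of_all _ hAbd)
  have hIg : Integrable (fun ω => I ω * g ω) μ :=
    hg_int.bdd_mul hImeas.aestronglyMeasurable (ae_of_all _ hIbd)
  have hAv : Integrable (fun ω => A ω * v ω) μ :=
    hv.bdd_mul hAmeas.aestronglyMeasurable (ae_of_all _ hAbd)
  have hIc : Integrable (fun ω => I ω * c) μ :=
    (integrable_const c).bdd_mul hImeas.aestronglyMeasurable (ae_of_all _ hIbd)
  have hκ : Integrable (fun ω => min (v ω) σ) μ := by
    have h := hv.sub hg_int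
    convert h using 1
    funext ω
    rcases le_total (v ω) σ with h' | h'
    · simp [hg_def, min_eq_left h', max_eq_right (by linarith : v ω - σ ≤ 0)]
    · simp [hg_def, min_eq_right h', max_eq_left (by linarith : (0:ℝ) ≤ v ω - σ)]
  have hAκ : Integrable (fun ω => A ω * min (v ω) σ) μ :=
    hκ.bdd_mul hAmeas.aestronglyMeasurable (ae_of_all _ hAbd)
  -- independence: ∫ I·g = ∫I · ∫g = ∫ I·c
  have hφ : Measurable (fun x : ℝ => max (x - σ) 0) :=
    (measurable_id.sub measurable_const).max measurable_const
  have hind2 : ProbabilityTheory.IndepFun I g μ := hindep.comp measurable_id hφ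
  have hIg_eq : ∫ ω, I ω * g ω ∂μ = ∫ ω, I ω * c ∂μ := by
    have h1 : ∫ ω, I ω * g ω ∂μ = (∫ ω, I ω ∂μ) * ∫ ω, g ω ∂μ :=
      hind2.integral_mul_eq_mul_integral hImeas.aestronglyMeasurable hg_int.aestronglyMeasurable
    have h2 : ∫ ω, I ω * c ∂μ = (∫ ω, I ω ∂μ) * c := by
      rw [integral_mul_const]
    rw [h1, h2, hσ]
  -- key identity
  have key : ∫ ω, A ω * min (v ω) σ ∂μ - ∫ ω, (A ω * v ω - I ω * c) ∂μ
      = ∫ ω, (I ω - A ω) * g ω ∂μ := by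
    rw [integral_sub hAv hIc]
    have h3 : ∫ ω, (I ω - A ω) * g ω ∂μ = ∫ ω, I ω * g ω ∂μ - ∫ ω, A ω * g ω ∂μ := by
      rw [← integral_sub hIg hAg]
      congr 1; funext ω; ring
    have h4 : ∫ ω, A ω * g ω ∂μ = ∫ ω, A ω * v ω ∂μ - ∫ ω, A ω * min (v ω) σ ∂μ := by
      rw [← integral_sub hAv hAκ]
      congr 1; funext ω
      have : v ω - min (v ω) σ = g ω := by
        rcases le_total (v ω) σ with h' | h'
        · simp [hg_def, min_eq_left h', max_eq_right (by linarith : v ω - σ ≤ 0)]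
        · simp [hg_def, min_eq_right h', max_eq_left (by linarith : (0:ℝ) ≤ v ω - σ)]
      calc A ω * g ω = A ω * (v ω - min (v ω) σ) := by rw [this]
        _ = A ω * v ω - A ω * min (v ω) σ := by ring
    rw [h3, h4, hIg_eq]; ring
  have hfnn : ∀ ω, 0 ≤ (I ω - A ω) * g ω := fun ω =>
    mul_nonneg (by linarith [hAI ω]) (le_max_right _ _)
  have hf_int : Integrable (fun ω => (I ω - A ω) * g ω) μ := by
    have h := hIg.sub hAg
    convert h using 1; funext ω; simp only [Pi.sub_apply]; ring
  constructor
  · have h0 : (0:ℝ) ≤ ∫ ω, (I ω - A ω) * g ω ∂μ := integral_nonneg hfnn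
    linarith [key]
  · rw [show (∫ ω, (A ω * v ω - I ω * c) ∂μ = ∫ ω, A ω * min (v ω) σ ∂μ) ↔
        (∫ ω, (I ω - A ω) * g ω ∂μ = 0) by rw [← key]; constructor <;> intro h <;> linarith]
    rw [integral_eq_zero_iff_of_nonneg hfnn hf_int]
    rw [Filter.eventuallyEq_iff_exists_mem]
    constructor
    · rintro ⟨s, hs, hse⟩
      rw [MeasureTheory.mem_ae_iff] at hs
      refine measure_mono_null ?_ hs
      intro ω hω
      simp only [Set.mem_setOf_eq] at hω
      obtain ⟨hI1, hσv, hA0⟩ := hω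
      intro hmem
      have := hse hmem
      simp only [Pi.zero_apply] at this
      rw [hI1, hA0] at this
      have hg0 : g ω = max (v ω - σ) 0 := rfl
      rw [hg0, max_eq_left (by linarith : (0:ℝ) ≤ v ω - σ)] at this
      nlinarith
    · intro hnull
      refine ⟨{ω | I ω = 1 ∧ σ < v ω ∧ A ω = 0}ᶜ, ?_, ?_⟩
      · rw [MeasureTheory.mem_ae_iff]; simpa using hnull
      · intro ω hω
        simp only [Set.mem_compl_iff, Set.mem_setOf_eq] at hω
        push_neg at hω
        simp only [Pi.zero_apply]
        rcases hI01 ω with hI0 | hI1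
        · rcases hA01 ω with hA0 | hA1
          · rw [hI0, hA0]; ring
          · exfalso; have := hAI ω; rw [hA1, hI0] at this; linarith
        · rcases hA01 ω with hA0 | hA1
          · have : ¬ σ < v ω := fun h => (hω hI1 h) hA0
            push_neg at this
            have : g ω = 0 := by
              simp [hg_def, max_eq_right (by linarith : v ω - σ ≤ 0)]
            rw [this]; ring
          · rw [hI1, hA1]; ring
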